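/- Let 0 → I → E → D → 0 be a unital extension of C*-algebras (q : E → D a unital surjective *-homomorphism with kernel I, E unital) where I is σ-unital and satisfies the Hjelmborg–Rørdam criterion (equivalently, I is stable). Then an element x ∈ E is full in E if and only if q(x) is full in D. Consequently, a *-homomorphism φ : A → E from a C*-algebra A is full if and only if q ∘ φ is full, and (for the forced unitizations) φ is unitizably full if and only if q ∘ φ is unitizably full. -/

import Mathlib

/-!
STATEMENT 4: For a unital extension `0 → I → E → D → 0` of C*-algebras with `I = ker q`
σ-unital and satisfying the Hjelmborg–Rørdam criterion (i.e. stable), an element `x ∈ E` is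
full iff `q(x)` is full; consequently a *-homomorphism `φ : A → E` is full iff `q ∘ φ` is,
and unitizably full iff `q ∘ φ` is.

Fullness of `a` in `D` is: the closed two-sided ideal generated by `a` is all of `D`.
Unitizable fullness of `φ : A → E` (with `E` unital) is encoded by: for every `a ∈ A` and
`λ ∈ ℂ` not both zero, the element `φ(a) + λ·1_E` (the image of `a + λ1 ∈ A†` under `φ†`)
is full.
-/

noncomputable section

/-- An element of a C*-algebra is full if the closed two-sided ideal it generates is
everything. -/
def IsFullElem {D : Type*} [NonUnitalCStarAlgebra D] (a : D) : Prop :=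
  closure ((TwoSidedIdeal.span {a} : TwoSidedIdeal D) : Set D) = Set.univ

/-- A subset `I` of a C*-algebra satisfies the Hjelmborg–Rørdam criterion if for every
positive `x ∈ I` and `ε > 0` there is `y ∈ I` with `‖x − y y*‖ < ε` and
`‖(y y*)(y* y)‖ < ε`. -/
def HRCriterion {E : Type*} [NonUnitalCStarAlgebra E] (I : Set E) : Prop :=
  ∀ x ∈ I, (∃ c : E, x = star c * c) → ∀ ε > (0 : ℝ),
    ∃ y ∈ I, ‖x - y * star y‖ < ε ∧ ‖(y * star y) * (star y * y)‖ < ε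

/-- A subset `I` of a C*-algebra is σ-unital if it contains a strictly positive element. -/
def SigmaUnitalSet {E : Type*} [NonUnitalCStarAlgebra E] (I : Set E) : Prop :=
  ∃ h ∈ I, (∃ c : E, h = star c * c) ∧ closure {z : E | ∃ a ∈ I, z = h * a * h} = I

/-- Elements of the ideal generated by `q x` lift to elements of the ideal generated
by `x`, when `q` is surjective. -/
lemma Statement4Aux.lift_span {E D : Type*} [CStarAlgebra E] [CStarAlgebra D]
    (q : E →⋆ₐ[ℂ] D) (hq : Function.Surjective q) (x : E) :
    ∀ d ∈ (TwoSidedIdeal.span {q x} : TwoSidedIdeal D),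
      ∃ e ∈ (TwoSidedIdeal.span {x} : TwoSidedIdeal E), q e = d := by
  intro d hd
  let K : TwoSidedIdeal D := TwoSidedIdeal.mk'
    (q '' ((TwoSidedIdeal.span {x} : TwoSidedIdeal E) : Set E))
    ⟨0, (TwoSidedIdeal.span {x}).zero_mem, map_zero q⟩
    (fun hx hy => by
      obtain ⟨a, ha, rfl⟩ := hx; obtain ⟨b, hb, rfl⟩ := hy
      exact ⟨a + b, (TwoSidedIdeal.span {x}).add_mem ha hb, map_add q a b⟩)
    (fun hx => by
      obtain ⟨a, ha, rfl⟩ := hx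
      exact ⟨-a, (TwoSidedIdeal.span {x}).neg_mem ha, map_neg q a⟩)
    (fun {c y} hy => by
      obtain ⟨b, hb, rfl⟩ := hy
      obtain ⟨c', rfl⟩ := hq c
      exact ⟨c' * b, (TwoSidedIdeal.span {x}).mul_mem_left c' b hb, map_mul q c' b⟩)
    (fun {y c} hy => by
      obtain ⟨b, hb, rfl⟩ := hy
      obtain ⟨c', rfl⟩ := hq c
      exact ⟨b * c', (TwoSidedIdeal.span {x}).mul_mem_right b c' hb, map_mul q b c'⟩)
  have hK : ({q x} : Set D) ⊆ K := by
    intro z hz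
    rw [Set.mem_singleton_iff] at hz
    subst hz
    rw [SetLike.mem_coe]; refine (TwoSidedIdeal.mem_mk' _ _ _ _ _ _ _).mpr ?_
    exact ⟨x, TwoSidedIdeal.subset_span rfl, rfl⟩
  have := TwoSidedIdeal.mem_span_iff.mp hd K hK
  replace this := (TwoSidedIdeal.mem_mk' _ _ _ _ _ _ _).mp this
  obtain ⟨e, he, heq⟩ := this
  exact ⟨e, he, heq⟩

/-- Easy direction: the image of a full element under a surjective morphism is full. -/
lemma Statement4Aux.full_image {E D : Type*} [CStarAlgebra E] [CStarAlgebra D]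
    (q : E →⋆ₐ[ℂ] D) (hq : Function.Surjective q) (x : E)
    (h : IsFullElem x) : IsFullElem (q x) := by
  have hcont : Continuous q :=
    AddMonoidHomClass.continuous_of_bound q 1
      (fun a => by simpa using NonUnitalStarAlgHom.norm_apply_le q a)
  have hpush : ∀ e ∈ (TwoSidedIdeal.span {x} : TwoSidedIdeal E),
      q e ∈ (TwoSidedIdeal.span {q x} : TwoSidedIdeal D) := by
    intro e he
    let L : TwoSidedIdeal E := TwoSidedIdeal.mk'
      (q ⁻¹' ((TwoSidedIdeal.span {q x} : TwoSidedIdeal D) : Set D))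
      (by rw [Set.mem_preimage, map_zero]; exact (TwoSidedIdeal.span {q x}).zero_mem)
      (fun hx hy => by
        simp only [Set.mem_preimage, SetLike.mem_coe, map_add] at *
        exact (TwoSidedIdeal.span {q x}).add_mem hx hy)
      (fun hx => by
        simp only [Set.mem_preimage, SetLike.mem_coe, map_neg] at *
        exact (TwoSidedIdeal.span {q x}).neg_mem hx)
      (fun {c y} hy => by
        simp only [Set.mem_preimage, SetLike.mem_coe, map_mul] at *
        exact (TwoSidedIdeal.span {q x}).mul_mem_left _ _ hy)
      (fun {y c} hy => by
        simp only [Set.mem_preimage, SetLike.mem_coe, map_mul] at *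
        exact (TwoSidedIdeal.span {q x}).mul_mem_right _ _ hy)
    have hL : ({x} : Set E) ⊆ L := by
      intro z hz
      rw [Set.mem_singleton_iff] at hz
      subst hz
      rw [SetLike.mem_coe, TwoSidedIdeal.mem_mk']
      exact TwoSidedIdeal.subset_span rfl
    have := TwoSidedIdeal.mem_span_iff.mp he L hL
    rwa [TwoSidedIdeal.mem_mk', Set.mem_preimage, SetLike.mem_coe] at this
  unfold IsFullElem at h ⊢
  apply Set.eq_univ_of_univ_subset
  calc (Set.univ : Set D) = q '' Set.univ := by
        rw [Set.image_univ, Set.range_eq_univ.mpr hq]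
    _ = q '' (closure ((TwoSidedIdeal.span {x} : TwoSidedIdeal E) : Set E)) := by rw [h]
    _ ⊆ closure (q '' ((TwoSidedIdeal.span {x} : TwoSidedIdeal E) : Set E)) :=
        image_closure_subset_closure_image hcont
    _ ⊆ closure ((TwoSidedIdeal.span {q x} : TwoSidedIdeal D) : Set D) := by
        apply closure_mono
        rintro z ⟨e, he, rfl⟩
        exact hpush e he

/-- Hard direction: if `q x` is full and `ker q` satisfies the Hjelmborg–Rørdam
criterion, then `x` is full. -/
lemma Statement4Aux.full_of_image {E D : Type*} [CStarAlgebra E] [CStarAlgebra D]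
    (q : E →⋆ₐ[ℂ] D) (hq : Function.Surjective q)
    (hHR : HRCriterion {x : E | q x = 0}) (x : E)
    (h : IsFullElem (q x)) : IsFullElem x := by
  have hlift := Statement4Aux.lift_span q hq x
  by_cases htriv : Subsingleton E
  · apply Set.eq_univ_of_forall
    intro z
    apply subset_closure
    rw [Subsingleton.elim z (0:E)]
    exact (TwoSidedIdeal.span {x}).zero_mem
  have : Nontrivial E := not_subsingleton_iff_nontrivial.mp htriv
  set J : TwoSidedIdeal E := TwoSidedIdeal.span {x} with hJ
  -- step 1: find d in span {q x} with ‖1 - d‖ < 1/2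
  have h1mem : (1 : D) ∈ closure ((TwoSidedIdeal.span {q x} : TwoSidedIdeal D) : Set D) := by
    rw [h]; trivial
  rw [Metric.mem_closure_iff] at h1mem
  obtain ⟨d, hdmem, hddist⟩ := h1mem (1/2) (by norm_num)
  rw [dist_eq_norm] at hddist
  -- d is invertible
  have hd_unit : IsUnit d := by
    have := isUnit_one_sub_of_norm_lt_one (x := 1 - d) (by linarith)
    simpa using this
  -- r ∈ J with q r = 1
  obtain ⟨e, he, heq⟩ := hlift d hdmem
  obtain ⟨e', he'⟩ := hq (↑hd_unit.unit⁻¹)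
  set r : E := e * e' with hr_def
  have hr : r ∈ J := J.mul_mem_right e e' he
  have hqr : q r = 1 := by
    rw [hr_def, map_mul, heq, he']
    nth_rewrite 1 [← hd_unit.unit_spec]
    exact hd_unit.unit.mul_inv
  -- r₂ selfadjoint-producing element
  set r₂ : E := star r * r with hr₂_def
  have hr₂ : r₂ ∈ J := J.mul_mem_left (star r) r hr
  have hqr₂ : q r₂ = 1 := by rw [hr₂_def, map_mul, map_star, hqr, star_one, one_mul]
  set i : E := 1 - r₂ with hi_def
  have hstar_i : star i = i := by
    rw [hi_def, star_sub, star_one, hr₂_def, star_mul, star_star]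
  set p : E := star i * i with hp_def
  have hqp : q p = 0 := by
    rw [hp_def, map_mul, map_star, hi_def, map_sub, map_one, hqr₂, sub_self, star_zero, zero_mul]
  set w₀ : E := (r₂ + r₂) - r₂ * r₂ with hw₀_def
  have hw₀ : w₀ ∈ J := J.sub_mem (J.add_mem hr₂ hr₂) (J.mul_mem_left r₂ r₂ hr₂)
  have hpw₀ : 1 - w₀ = p := by
    rw [hp_def, hstar_i, hi_def, hw₀_def]; noncomm_ring
  -- constants
  set B : ℝ := ‖p‖ + 1 with hB_def
  have hB1 : (1:ℝ) ≤ B := by linarith [norm_nonneg p]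
  set K : ℝ := B^2*(1+B) + (1 + B + B^2) with hK_def
  have hK1 : (1:ℝ) ≤ K := by nlinarith
  set ε : ℝ := 1/(2*K) with hε_def
  have hεpos : 0 < ε := by positivity
  have hε1 : ε ≤ 1 := by
    rw [hε_def, div_le_one (by linarith)]; linarith
  -- apply HR
  obtain ⟨y, -, hy1, hy2⟩ := hHR p hqp ⟨i, hp_def⟩ ε hεpos
  set u : E := y * star y with hu_def
  set v : E := star y * y with hv_def
  have hvu : ‖v‖ = ‖u‖ := by
    rw [hv_def, hu_def, CStarRing.norm_star_mul_self, CStarRing.norm_self_mul_star]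
  have hu_le : ‖u‖ ≤ B := by
    have : ‖u‖ ≤ ‖p‖ + ‖p - u‖ := by
      calc ‖u‖ = ‖p - (p - u)‖ := by rw [sub_sub_cancel]
        _ ≤ ‖p‖ + ‖p - u‖ := norm_sub_le _ _
    linarith
  have hv_le : ‖v‖ ≤ B := hvu ▸ hu_le
  have hyy : ‖y‖ * ‖star y‖ ≤ B := by
    rw [norm_star]
    calc ‖y‖ * ‖y‖ = ‖u‖ := (CStarRing.norm_self_mul_star).symm
      _ ≤ B := hu_le
  -- witnesses
  set w₁ : E := w₀ * v with hw₁_def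
  have hw₁ : w₁ ∈ J := J.mul_mem_right w₀ v hw₀
  have hv_est : ‖v - w₁‖ ≤ ε + ε * B := by
    have key : v - w₁ = (p - u) * v + u * v := by
      rw [hw₁_def, ← hpw₀]; noncomm_ring
    rw [key]
    calc ‖(p - u) * v + u * v‖ ≤ ‖(p - u) * v‖ + ‖u * v‖ := norm_add_le _ _
      _ ≤ ‖p - u‖ * ‖v‖ + ‖u * v‖ := add_le_add (norm_mul_le _ _) le_rfl
      _ ≤ ε * B + ε :=
          add_le_add (mul_le_mul hy1.le hv_le (norm_nonneg _) hεpos.le) hy2.le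
      _ = ε + ε * B := by ring
  set w₂ : E := w₁ * v with hw₂_def
  have hw₂ : w₂ ∈ J := J.mul_mem_right w₁ v hw₁
  have hv2_est : ‖v * v - w₂‖ ≤ (ε + ε * B) * B := by
    have key : v * v - w₂ = (v - w₁) * v := by rw [hw₂_def]; noncomm_ring
    rw [key]
    calc ‖(v - w₁) * v‖ ≤ ‖v - w₁‖ * ‖v‖ := norm_mul_le _ _
      _ ≤ (ε + ε * B) * B := by
          apply mul_le_mul hv_est hv_le (norm_nonneg _) (by positivity)
  set w₃ : E := y * w₂ * star y with hw₃_def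
  have hw₃ : w₃ ∈ J := J.mul_mem_right (y * w₂) (star y) (J.mul_mem_left y w₂ hw₂)
  have hu3 : u * u * u = y * (v * v) * star y := by
    rw [hu_def, hv_def]; simp only [mul_assoc]
  have hu3_est : ‖u * u * u - w₃‖ ≤ B * ((ε + ε * B) * B) := by
    have key : u * u * u - w₃ = y * (v * v - w₂) * star y := by
      rw [hu3, hw₃_def]; noncomm_ring
    rw [key]
    calc ‖y * (v * v - w₂) * star y‖ ≤ ‖y * (v * v - w₂)‖ * ‖star y‖ := norm_mul_le _ _
      _ ≤ ‖y‖ * ‖v * v - w₂‖ * ‖star y‖ := by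
            gcongr
            exact norm_mul_le _ _
      _ = ‖y‖ * ‖star y‖ * ‖v * v - w₂‖ := by ring
      _ ≤ B * ((ε + ε * B) * B) :=
          mul_le_mul hyy hv2_est (norm_nonneg _) (by linarith)
  set w₄ : E := w₀ * (1 + u + u * u) with hw₄_def
  have hw₄ : w₄ ∈ J := J.mul_mem_right w₀ _ hw₀
  have hu4_est : ‖(1 - u * u * u) - w₄‖ ≤ ε * (1 + B + B^2) := by
    have key : (1 - u * u * u) - w₄ = (p - u) * (1 + u + u * u) := by
      rw [hw₄_def, ← hpw₀]; noncomm_ring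
    rw [key]
    calc ‖(p - u) * (1 + u + u * u)‖ ≤ ‖p - u‖ * ‖1 + u + u * u‖ := norm_mul_le _ _
      _ ≤ ε * (1 + B + B^2) := by
          apply mul_le_mul (le_of_lt hy1) ?_ (norm_nonneg _) (le_of_lt hεpos)
          calc ‖1 + u + u * u‖ ≤ ‖(1:E)‖ + ‖u‖ + ‖u * u‖ := by
                refine (norm_add_le _ _).trans ?_
                gcongr
                exact norm_add_le _ _
            _ ≤ 1 + B + B^2 := by
                have h1 : ‖(1:E)‖ = 1 := norm_one
                have h2 : ‖u * u‖ ≤ B^2 := by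
                  calc ‖u * u‖ ≤ ‖u‖ * ‖u‖ := norm_mul_le _ _
                    _ ≤ B^2 := by nlinarith [norm_nonneg u]
                rw [h1]
                exact add_le_add (add_le_add le_rfl hu_le) h2
  set w₅ : E := w₃ + w₄ with hw₅_def
  have hw₅ : w₅ ∈ J := J.add_mem hw₃ hw₄
  have hfinal : ‖1 - w₅‖ < 1 := by
    have key : 1 - w₅ = (u * u * u - w₃) + ((1 - u * u * u) - w₄) := by
      rw [hw₅_def]; abel
    rw [key]
    calc ‖(u * u * u - w₃) + ((1 - u * u * u) - w₄)‖
        ≤ ‖u * u * u - w₃‖ + ‖(1 - u * u * u) - w₄‖ := norm_add_le _ _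
      _ ≤ B * ((ε + ε * B) * B) + ε * (1 + B + B^2) := add_le_add hu3_est hu4_est
      _ = ε * K := by rw [hK_def]; ring
      _ = 1/2 := by rw [hε_def]; field_simp
      _ < 1 := by norm_num
  -- w₅ is invertible, so 1 ∈ J
  have hw₅_unit : IsUnit w₅ := by
    have := isUnit_one_sub_of_norm_lt_one (x := 1 - w₅) hfinal
    simpa using this
  have hone : (1 : E) ∈ J := by
    have : (↑hw₅_unit.unit⁻¹ : E) * w₅ ∈ J := J.mul_mem_left _ _ hw₅
    rwa [show (↑hw₅_unit.unit⁻¹ : E) * w₅ = 1 by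
      nth_rewrite 2 [← hw₅_unit.unit_spec]; exact hw₅_unit.unit.inv_mul] at this
  have hall : (J : Set E) = Set.univ := by
    apply Set.eq_univ_of_forall
    intro z
    have := J.mul_mem_left z 1 hone
    rwa [mul_one] at this
  unfold IsFullElem
  rw [hall, closure_univ]

theorem statement4
    {A E D : Type*} [NonUnitalCStarAlgebra A] [CStarAlgebra E] [CStarAlgebra D]
    -- the unital extension `0 → I → E → D → 0`, with `I = ker q`
    (q : E →⋆ₐ[ℂ] D) (hq : Function.Surjective q)
    (hσ : SigmaUnitalSet {x : E | q x = 0})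
    (hHR : HRCriterion {x : E | q x = 0}) :
    -- an element is full iff its image is full
    (∀ x : E, IsFullElem x ↔ IsFullElem (q x)) ∧
    -- a *-homomorphism into `E` is full iff its composition with `q` is full
    (∀ φ : A →⋆ₙₐ[ℂ] E,
      ((∀ a : A, a ≠ 0 → IsFullElem (φ a)) ↔ (∀ a : A, a ≠ 0 → IsFullElem (q (φ a))))) ∧
    -- a *-homomorphism into `E` is unitizably full iff its composition with `q` is
    (∀ φ : A →⋆ₙₐ[ℂ] E,
      ((∀ (a : A) (lam : ℂ), ¬(a = 0 ∧ lam = 0) → IsFullElem (φ a + lam • (1 : E))) ↔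
       (∀ (a : A) (lam : ℂ), ¬(a = 0 ∧ lam = 0) → IsFullElem (q (φ a) + lam • (1 : D))))) := by
  have main : ∀ x : E, IsFullElem x ↔ IsFullElem (q x) := fun x =>
    ⟨Statement4Aux.full_image q hq x, Statement4Aux.full_of_image q hq hHR x⟩
  refine ⟨main, ?_, ?_⟩
  · intro φ
    exact ⟨fun h a ha => (main _).mp (h a ha), fun h a ha => (main _).mpr (h a ha)⟩
  · intro φ
    have key : ∀ (a : A) (lam : ℂ), q (φ a + lam • (1 : E)) = q (φ a) + lam • (1 : D) := by
      intro a lam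
      rw [map_add, map_smul, map_one]
    constructor
    · intro h a lam hne
      have := (main _).mp (h a lam hne)
      rwa [key] at this
    · intro h a lam hne
      have := h a lam hne
      rw [← key] at this
      exact (main _).mpr this
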